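/- Let f: {1,…,n} → {1,…,m} be a surjection of sets with l+1 ≤ m ≤ n. Then the restriction of f_* to the fixed subspace W_{n,l}^{𝔖_f} is a linear isomorphism onto W_{m,l}. In particular dim_ℂ W_{n,l}^{𝔖_f} = C(m−1, l), and when m = l+1 the subspace W_{n,l}^{𝔖_f} is one-dimensional. -/

import Mathlib

noncomputable section

open ExteriorAlgebra

/-- The sum-of-coordinates linear functional on `ℂ^n`. -/
def sumLin (n : ℕ) : (Fin n → ℂ) →ₗ[ℂ] ℂ where
  toFun x := ∑ i, x i
  map_add' x y := by simp [Finset.sum_add_distrib]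
  map_smul' c x := by simp [Finset.mul_sum]

/-- The standard representation `V_n = {x : ℂ^n | x_1 + ⋯ + x_n = 0}`. -/
def stdRep (n : ℕ) : Submodule ℂ (Fin n → ℂ) := LinearMap.ker (sumLin n)

/-- The exterior algebra of `ℂ^n`; the ambient home of `⋀^l ℂ^n`. -/
abbrev EA (n : ℕ) := ExteriorAlgebra ℂ (Fin n → ℂ)

/-- `W_{n,l} = ⋀^l V_n`, realized inside `⋀^l ℂ^n ⊆ ExteriorAlgebra ℂ ℂ^n`. -/
def Wsub (n l : ℕ) : Submodule ℂ (EA n) :=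
  (⋀[ℂ]^l ↥(stdRep n)).map (ExteriorAlgebra.map (stdRep n).subtype).toLinearMap

/-- The action of a permutation `σ ∈ 𝔖_n` on `⋀ ℂ^n`, induced by `(σ • x) i = x (σ⁻¹ i)`
(so that `σ • e_j = e_{σ j}`). -/
def permMap (n : ℕ) (σ : Equiv.Perm (Fin n)) : EA n →ₗ[ℂ] EA n :=
  (ExteriorAlgebra.map (LinearMap.funLeft ℂ ℂ ⇑σ⁻¹)).toLinearMap

/-- The standard basis vector `e_i` of `ℂ^n`. -/
def evec (n : ℕ) (i : Fin n) : Fin n → ℂ := Pi.single i 1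

/-- For an `(l+1)`-subset `α = {a_0 < a_1 < ⋯ < a_l}` of `{1,…,n}`,
the family of vectors `e_{a_i} − e_{a_0}`, `i = 1, …, l`. -/
def uvecs (n l : ℕ) (α : Finset (Fin n)) (hα : α.card = l + 1) : Fin l → (Fin n → ℂ) :=
  fun i => evec n ↑(α.orderIsoOfFin hα i.succ) - evec n ↑(α.orderIsoOfFin hα 0)

/-- The vector `w_α = (e_{a_1} − e_{a_0}) ∧ ⋯ ∧ (e_{a_l} − e_{a_0})`. -/
def wvec (n l : ℕ) (α : Finset (Fin n)) (hα : α.card = l + 1) : EA n :=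
  ιMulti ℂ l (uvecs n l α hα)

/-- The standard Hermitian inner product on `ℂ^n` against a fixed vector `u`
(linear in the first slot). -/
def stdInner (n : ℕ) (u : Fin n → ℂ) : (Fin n → ℂ) →ₗ[ℂ] ℂ where
  toFun x := ∑ k, x k * (starRingEnd ℂ) (u k)
  map_add' x y := by simp [add_mul, Finset.sum_add_distrib]
  map_smul' c x := by simp [Finset.mul_sum, mul_assoc]

/-- The linear map `x ↦ (⟨x, u_1⟩, …, ⟨x, u_l⟩)`. -/
def rowsMap (n l : ℕ) (u : Fin l → (Fin n → ℂ)) : (Fin n → ℂ) →ₗ[ℂ] (Fin l → ℂ) :=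
  LinearMap.pi fun j => stdInner n (u j)

/-- The alternating map `(v_1, …, v_l) ↦ det (⟨v_i, u_j⟩)_{ij}`. -/
def detPair (n l : ℕ) (u : Fin l → (Fin n → ℂ)) : (Fin n → ℂ) [⋀^Fin l]→ₗ[ℂ] ℂ :=
  (Matrix.detRowAlternating : (Fin l → ℂ) [⋀^Fin l]→ₗ[ℂ] ℂ).compLinearMap (rowsMap n l u)

/-- The linear functional `v ↦ ⟨v, u_1 ∧ ⋯ ∧ u_l⟩` on the exterior algebra: the Hermitian
inner product on `⋀^l ℂ^n` induced by the standard inner product, paired against a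
fixed pure wedge, extended by zero in other degrees. -/
def pairFun (n l : ℕ) (u : Fin l → (Fin n → ℂ)) : EA n →ₗ[ℂ] ℂ :=
  liftAlternating (fun i => if h : l = i then h ▸ detPair n l u else 0)

/-- The hyperplane `H_α = {v ∈ W_{n,l} : ⟨v, w_α⟩ = 0}`. -/
def Hplane (n l : ℕ) (α : Finset (Fin n)) (hα : α.card = l + 1) : Submodule ℂ (EA n) :=
  Wsub n l ⊓ LinearMap.ker (pairFun n l (uvecs n l α hα))
/-- The linear map `ℂ^n → ℂ^m` sending `e_i` to `e_{f i}`. -/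
def pushLin (n m : ℕ) (f : Fin n → Fin m) : (Fin n → ℂ) →ₗ[ℂ] (Fin m → ℂ) where
  toFun x := fun j => ∑ i ∈ Finset.univ.filter (fun i => f i = j), x i
  map_add' x y := by funext j; simp [Finset.sum_add_distrib]
  map_smul' c x := by funext j; simp [Finset.mul_sum]

/-- The induced map `f_* : ⋀ ℂ^n → ⋀ ℂ^m` (the exterior power of `e_i ↦ e_{f i}`). -/
def fstar (n m : ℕ) (f : Fin n → Fin m) : EA n →ₗ[ℂ] EA m :=
  (ExteriorAlgebra.map (pushLin n m f)).toLinearMap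

/-- The Young subgroup `𝔖_f ≤ 𝔖_n` of permutations preserving every fiber of `f`. -/
def youngSubgroup (n m : ℕ) (f : Fin n → Fin m) : Subgroup (Equiv.Perm (Fin n)) where
  carrier := {σ | ∀ i, f (σ i) = f i}
  one_mem' := fun _ => rfl
  mul_mem' := by
    intro a b ha hb i
    have h : (a * b) i = a (b i) := rfl
    rw [h, ha (b i), hb i]
  inv_mem' := by
    intro a ha i
    have h := ha (a⁻¹ i)
    rw [show a (a⁻¹ i) = i by simp] at h
    exact h.symm

/-- The special flat `F_f`: the intersection (inside `W_{n,l}`) of the hyperplanes `H_α`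
over all `(l+1)`-subsets `α` with `|f(α)| ≤ l`. -/
def specialFlat (n m l : ℕ) (f : Fin n → Fin m) : Submodule ℂ (EA n) :=
  Wsub n l ⊓ ⨅ (α : Finset (Fin n)) (hα : α.card = l + 1) (_ : (α.image f).card ≤ l),
    Hplane n l α hα

/-- The fixed subspace `W_{n,l}^{𝔖_f} = {v ∈ W_{n,l} : σ·v = v for all σ ∈ 𝔖_f}`. -/
def fixedW (n m l : ℕ) (f : Fin n → Fin m) : Submodule ℂ (EA n) :=
  Wsub n l ⊓ ⨅ (σ : Equiv.Perm (Fin n)) (_ : σ ∈ youngSubgroup n m f),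
    LinearMap.ker (permMap n σ - LinearMap.id)

/-- The sections of `f : {1,…,n} → {1,…,m}`: maps `g` with `f ∘ g = id`. -/
abbrev sections (n m : ℕ) (f : Fin n → Fin m) := {g : Fin m → Fin n // f ∘ g = id}

/-- The averaging map `φ_f = (1/n_f) Σ_g g_*`, over all sections `g` of `f`. -/
def phiMap (n m : ℕ) (f : Fin n → Fin m) : EA m →ₗ[ℂ] EA n :=
  letI : Fintype (sections n m f) := Fintype.ofFinite _
  (Nat.card (sections n m f) : ℂ)⁻¹ •
    ∑ g : sections n m f, (ExteriorAlgebra.map (pushLin m n g.1)).toLinearMap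

/-- A flat of the intrinsic arrangement `A_n`: an intersection of a set of hyperplanes `H_α`
(inside the ambient space `W_{n,l}` of the arrangement). -/
def IsFlat (n l : ℕ) (U : Submodule ℂ (EA n)) : Prop :=
  ∃ S : Set {α : Finset (Fin n) // α.card = l + 1},
    U = Wsub n l ⊓ ⨅ a ∈ S, Hplane n l a.1 a.2

/-- The set of lines (one-dimensional flats) of the arrangement `A_n`. -/
def lines (n l : ℕ) : Set (Submodule ℂ (EA n)) :=
  {U | IsFlat n l U ∧ Module.finrank ℂ ↥U = 1}

/-- A flat is stable if it is contained in a special flat `F_f` for some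
surjection `f : {1,…,n} → {1,…,m}` with `m < n`. -/
def IsStable (n l : ℕ) (U : Submodule ℂ (EA n)) : Prop :=
  ∃ (m : ℕ) (f : Fin n → Fin m), Function.Surjective f ∧ m < n ∧ U ≤ specialFlat n m l f

/-- The Stirling number of the second kind `S(n,k)`: the number of partitions of
`{1,…,n}` into `k` nonempty blocks. -/
def stirling (n k : ℕ) : ℕ :=
  Nat.card {P : Finpartition (Finset.univ : Finset (Fin n)) // P.parts.card = k}

section Aux
open Finset

lemma evec_apply (n : ℕ) (i k : Fin n) : evec n i k = if k = i then 1 else 0 :=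
  Pi.single_apply i 1 k

lemma stdInner_evec (n : ℕ) (i : Fin n) (x : Fin n → ℂ) :
    stdInner n (evec n i) x = x i := by
  simp [stdInner, evec, Pi.single_apply, apply_ite (starRingEnd ℂ), mul_ite]

lemma pairFun_ιMulti (n l : ℕ) (u v : Fin l → (Fin n → ℂ)) :
    pairFun n l u (ιMulti ℂ l v) = Matrix.det (Matrix.of fun a b => stdInner n (u b) (v a)) := by
  rw [pairFun, ExteriorAlgebra.liftAlternating_apply_ιMulti]
  rw [dif_pos rfl]
  rfl
lemma pushLin_evec (n m : ℕ) (f : Fin n → Fin m) (i : Fin n) :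
    pushLin n m f (evec n i) = evec m (f i) := by
  funext k
  simp only [pushLin, LinearMap.coe_mk, AddHom.coe_mk, evec, Pi.single_apply]
  rw [Finset.sum_ite_eq' (Finset.univ.filter (fun a => f a = k)) i (fun _ => (1:ℂ))]
  simp [eq_comm]
lemma pushLin_comp (k n m : ℕ) (g : Fin k → Fin n) (f : Fin n → Fin m) :
    (pushLin n m f).comp (pushLin k n g) = pushLin k m (f ∘ g) := by
  apply (Pi.basisFun ℂ (Fin k)).ext
  intro i
  have : Pi.basisFun ℂ (Fin k) i = evec k i := by
    funext j; simp [Pi.basisFun_apply, evec]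
  simp [this, pushLin_evec, Function.comp]

lemma pushLin_id (n : ℕ) : pushLin n n id = LinearMap.id := by
  apply (Pi.basisFun ℂ (Fin n)).ext
  intro i
  have : Pi.basisFun ℂ (Fin n) i = evec n i := by
    funext j; simp [Pi.basisFun_apply, evec]
  simp [this, pushLin_evec]

lemma funLeft_eq_pushLin (n : ℕ) (σ : Equiv.Perm (Fin n)) :
    LinearMap.funLeft ℂ ℂ ⇑σ⁻¹ = pushLin n n ⇑σ := by
  apply (Pi.basisFun ℂ (Fin n)).ext
  intro i
  have hb : Pi.basisFun ℂ (Fin n) i = evec n i := by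
    funext j; simp [Pi.basisFun_apply, evec]
  rw [hb, pushLin_evec]
  funext kk
  simp only [LinearMap.funLeft_apply, evec, Pi.single_apply]
  have : σ⁻¹ kk = i ↔ kk = σ i := by
    constructor
    · intro h; rw [← h, show σ (σ⁻¹ kk) = kk by simp]
    · intro h; rw [h, show σ⁻¹ (σ i) = i by simp]
  simp only [this]

lemma permMap_eq (n : ℕ) (σ : Equiv.Perm (Fin n)) :
    permMap n σ = (ExteriorAlgebra.map (pushLin n n ⇑σ)).toLinearMap := by
  rw [permMap, funLeft_eq_pushLin]

lemma permMap_ιMulti (n l : ℕ) (σ : Equiv.Perm (Fin n)) (j : Fin l → Fin n) :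
    permMap n σ (ιMulti ℂ l (fun a => evec n (j a))) =
      ιMulti ℂ l (fun a => evec n (σ (j a))) := by
  rw [permMap_eq]
  simp only [AlgHom.toLinearMap_apply, ExteriorAlgebra.map_apply_ιMulti]
  congr 1
  funext a
  simp [Function.comp, pushLin_evec]

lemma fstar_ιMulti (n m l : ℕ) (f : Fin n → Fin m) (j : Fin l → Fin n) :
    fstar n m f (ιMulti ℂ l (fun a => evec n (j a))) =
      ιMulti ℂ l (fun a => evec m (f (j a))) := by
  simp only [fstar, AlgHom.toLinearMap_apply, ExteriorAlgebra.map_apply_ιMulti]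
  congr 1
  funext a
  simp [Function.comp, pushLin_evec]

lemma sumLin_pushLin (n m : ℕ) (f : Fin n → Fin m) (x : Fin n → ℂ) :
    sumLin m (pushLin n m f x) = sumLin n x := by
  simp only [sumLin, pushLin, LinearMap.coe_mk, AddHom.coe_mk]
  exact Finset.sum_fiberwise _ _ _
set_option synthInstance.maxHeartbeats 1000000
set_option maxHeartbeats 2000000
lemma map_exteriorPower_le {M N : Type*} [AddCommGroup M] [Module ℂ M]
    [AddCommGroup N] [Module ℂ N] (l : ℕ) (g : M →ₗ[ℂ] N) :
    Submodule.map (ExteriorAlgebra.map g).toLinearMap (⋀[ℂ]^l M) ≤ ⋀[ℂ]^l N := by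
  rw [← ExteriorAlgebra.ιMulti_span_fixedDegree ℂ l (M := M),
    ← ExteriorAlgebra.ιMulti_span_fixedDegree ℂ l (M := N), Submodule.map_span]
  apply Submodule.span_le.2
  rintro _ ⟨_, ⟨v, rfl⟩, rfl⟩
  exact Submodule.subset_span ⟨g ∘ v, (ExteriorAlgebra.map_apply_ιMulti g v).symm⟩

lemma map_Wsub_le (p q l : ℕ) (L : (Fin p → ℂ) →ₗ[ℂ] (Fin q → ℂ))
    (hL : ∀ x ∈ stdRep p, L x ∈ stdRep q) :
    Submodule.map (ExteriorAlgebra.map L).toLinearMap (Wsub p l) ≤ Wsub q l := by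
  rw [Wsub, ← Submodule.map_comp, ← AlgHom.comp_toLinearMap, ExteriorAlgebra.map_comp_map]
  have h : L ∘ₗ (stdRep p).subtype = (stdRep q).subtype ∘ₗ (L.restrict hL) := by
    ext x; rfl
  rw [h, ← ExteriorAlgebra.map_comp_map, AlgHom.comp_toLinearMap, Submodule.map_comp, Wsub]
  exact Submodule.map_mono (map_exteriorPower_le l _)

lemma fstar_Wsub_le (n m l : ℕ) (f : Fin n → Fin m) :
    Submodule.map (fstar n m f) (Wsub n l) ≤ Wsub m l := by
  apply map_Wsub_le
  intro x hx
  simp only [stdRep, LinearMap.mem_ker] at hx ⊢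
  rw [sumLin_pushLin, hx]
abbrev BS (n l : ℕ) := {S : Finset (Fin n) // S.card = l}

def tupF {α : Type*} [LinearOrder α] {l : ℕ} (S : {S : Finset α // S.card = l}) : Fin l → α :=
  fun j => ↑(S.1.orderIsoOfFin S.2 j)

lemma tupF_injective {α : Type*} [LinearOrder α] {l : ℕ} (S : {S : Finset α // S.card = l}) :
    Function.Injective (tupF S) := by
  intro a b h
  have := Subtype.ext h (p := fun x => x ∈ S.1)
  exact (S.1.orderIsoOfFin S.2).injective this

lemma tupF_mem {α : Type*} [LinearOrder α] {l : ℕ} (S : {S : Finset α // S.card = l}) (a : Fin l) :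
    tupF S a ∈ S.1 := (S.1.orderIsoOfFin S.2 a).2

lemma image_tupF {α : Type*} [LinearOrder α] [DecidableEq α] {l : ℕ}
    (S : {S : Finset α // S.card = l}) :
    Finset.image (tupF S) Finset.univ = S.1 := by
  apply Finset.eq_of_subset_of_card_le
  · intro x hx
    obtain ⟨a, _, rfl⟩ := Finset.mem_image.1 hx
    exact tupF_mem S a
  · rw [S.2, Finset.card_image_of_injective _ (tupF_injective S), Finset.card_univ,
      Fintype.card_fin]

lemma ιMulti_expand {M : Type*} [AddCommGroup M] [Module ℂ M] {l : ℕ} {κ : Type*}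
    [Fintype κ] [DecidableEq κ]
    (x : Fin l → M) (c : Fin l → κ → ℂ) (b : κ → M) (h : ∀ a, x a = ∑ i, c a i • b i) :
    ιMulti ℂ l x = ∑ j : Fin l → κ, (∏ a, c a (j a)) • ιMulti ℂ l (fun a => b (j a)) := by
  have hx : x = fun a => ∑ i : κ, c a i • b i := funext h
  rw [hx]
  rw [show ((ιMulti ℂ l (M := M)) (fun a => ∑ i : κ, c a i • b i)) =
    (ιMulti ℂ l (M := M)).toMultilinearMap (fun a => ∑ i : κ, c a i • b i) from rfl,
    MultilinearMap.map_sum]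
  apply Finset.sum_congr rfl
  intro j _
  exact MultilinearMap.map_smul_univ _ _ _

lemma ιMulti_comp_mem_span {κ : Type*} [Fintype κ] [LinearOrder κ] {M : Type*}
    [AddCommGroup M] [Module ℂ M] (l : ℕ) (b : κ → M) (j : Fin l → κ) :
    ιMulti ℂ l (fun a => b (j a)) ∈ Submodule.span ℂ
      (Set.range (fun S : {S : Finset κ // S.card = l} =>
        ιMulti ℂ l (fun a => b (tupF S a)))) := by
  classical
  by_cases hj : Function.Injective j
  · refine ?_
    set S : {S : Finset κ // S.card = l} := ⟨Finset.image j Finset.univ, by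
      rw [Finset.card_image_of_injective _ hj, Finset.card_univ, Fintype.card_fin]⟩ with hS
    have hmem : ∀ a, j a ∈ S.1 := fun a => Finset.mem_image_of_mem _ (Finset.mem_univ a)
    set θfun : Fin l → Fin l := fun a => (S.1.orderIsoOfFin S.2).symm ⟨j a, hmem a⟩ with hθ
    have hθinj : Function.Injective θfun := by
      intro a a' hh
      apply hj
      have h2 := congrArg (fun t => ((S.1.orderIsoOfFin S.2) t : κ)) hh
      simpa [hθ] using h2
    have hbij := Finite.injective_iff_bijective.mp hθinj
    have hcomp : (fun a => b (tupF S a)) ∘ (Equiv.ofBijective θfun hbij) =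
        fun a => b (j a) := by
      funext a
      simp only [Function.comp_apply, Equiv.ofBijective_apply, tupF, hθ]
      congr 1
      exact congrArg Subtype.val ((S.1.orderIsoOfFin S.2).apply_symm_apply ⟨j a, hmem a⟩)
    have hperm := AlternatingMap.map_perm (ιMulti ℂ l (M := M)) (fun a => b (tupF S a))
      (Equiv.ofBijective θfun hbij)
    rw [hcomp] at hperm
    rw [hperm]
    exact Submodule.smul_mem _ _ (Submodule.subset_span ⟨S, rfl⟩)
  · rw [Function.not_injective_iff] at hj
    obtain ⟨p, q, hpq, hne⟩ := hj
    rw [(ιMulti ℂ l (M := M)).map_eq_zero_of_eq (fun a => b (j a)) (congrArg b hpq) hne]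
    exact Submodule.zero_mem _

def wB (n l : ℕ) (S : BS n l) : EA n := ιMulti ℂ l (fun a => evec n (tupF S a))

lemma x_expand (n : ℕ) (x : Fin n → ℂ) : x = ∑ i, x i • evec n i := by
  funext k
  rw [Finset.sum_apply]
  simp [evec, Pi.single_apply, mul_ite]

lemma ιMulti_mem_span_wB (n l : ℕ) (v : Fin l → (Fin n → ℂ)) :
    ιMulti ℂ l v ∈ Submodule.span ℂ (Set.range (wB n l)) := by
  rw [ιMulti_expand v (fun a i => v a i) (evec n) (fun a => x_expand n (v a))]
  apply Submodule.sum_mem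
  intro j _
  exact Submodule.smul_mem _ _ (ιMulti_comp_mem_span l (evec n) j)

lemma Wsub_le_span (n l : ℕ) : Wsub n l ≤ Submodule.span ℂ (Set.range (wB n l)) := by
  rw [Wsub, ← ExteriorAlgebra.ιMulti_span_fixedDegree ℂ l, Submodule.map_span]
  apply Submodule.span_le.2
  rintro _ ⟨_, ⟨v, rfl⟩, rfl⟩
  rw [AlgHom.toLinearMap_apply, ExteriorAlgebra.map_apply_ιMulti]
  exact ιMulti_mem_span_wB n l _
def cB (n l : ℕ) (S : BS n l) : EA n →ₗ[ℂ] ℂ := pairFun n l (fun a => evec n (tupF S a))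

lemma cB_ιMulti_evec (n l : ℕ) (S : BS n l) (j : Fin l → Fin n) :
    cB n l S (ιMulti ℂ l (fun a => evec n (j a))) =
      Matrix.det (Matrix.of fun a b => if j a = tupF S b then (1 : ℂ) else 0) := by
  rw [cB, pairFun_ιMulti]
  congr 1
  ext a b
  simp only [Matrix.of_apply]
  rw [stdInner_evec, evec_apply]
  simp [eq_comm]

lemma cB_eq_zero (n l : ℕ) (S : BS n l) (j : Fin l → Fin n)
    (h : Finset.image j Finset.univ ≠ S.1) :
    cB n l S (ιMulti ℂ l (fun a => evec n (j a))) = 0 := by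
  rw [cB_ιMulti_evec]
  have hex : ∃ s ∈ S.1, s ∉ Finset.image j Finset.univ := by
    by_contra hcon
    push_neg at hcon
    have hcard : S.1.card ≤ (Finset.image j Finset.univ).card := by
      exact Finset.card_le_card hcon
    have hcard2 : (Finset.image j Finset.univ).card ≤ l :=
      le_trans Finset.card_image_le (by simp)
    exact h (Finset.eq_of_subset_of_card_le hcon (by rw [S.2]; exact hcard2)).symm
  obtain ⟨s, hs, hns⟩ := hex
  obtain ⟨b, hb⟩ : ∃ b, tupF S b = s :=
    ⟨(S.1.orderIsoOfFin S.2).symm ⟨s, hs⟩, congrArg Subtype.val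
      ((S.1.orderIsoOfFin S.2).apply_symm_apply ⟨s, hs⟩)⟩
  apply Matrix.det_eq_zero_of_column_eq_zero b
  intro a
  simp only [Matrix.of_apply]
  rw [if_neg]
  intro hcon2
  exact hns (by rw [← hb, ← hcon2]; exact Finset.mem_image_of_mem j (Finset.mem_univ a))

lemma cB_wB (n l : ℕ) (S T : BS n l) :
    cB n l S (wB n l T) = if S = T then 1 else 0 := by
  by_cases hST : S = T
  · subst hST
    rw [if_pos rfl, wB, cB_ιMulti_evec]
    have : (Matrix.of fun a b => if tupF S a = tupF S b then (1 : ℂ) else 0) = 1 := by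
      ext a b
      simp only [Matrix.of_apply, Matrix.one_apply]
      by_cases hab : a = b
      · simp [hab]
      · rw [if_neg (fun hh => hab (tupF_injective S hh)), if_neg hab]
    rw [this, Matrix.det_one]
  · rw [if_neg hST, wB, cB_eq_zero]
    rw [image_tupF]
    intro hc
    exact hST (Subtype.ext hc.symm)
lemma sections_nonempty (n m : ℕ) (f : Fin n → Fin m) (hf : Function.Surjective f) :
    Nonempty (sections n m f) :=
  ⟨⟨Function.surjInv hf, funext fun j => Function.surjInv_eq hf j⟩⟩

lemma fstar_comp_section (n m : ℕ) (f : Fin n → Fin m) (g : sections n m f) :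
    (fstar n m f) ∘ₗ (ExteriorAlgebra.map (pushLin m n g.1)).toLinearMap = LinearMap.id := by
  rw [fstar, ← AlgHom.comp_toLinearMap, ExteriorAlgebra.map_comp_map, pushLin_comp, g.2,
    pushLin_id, ExteriorAlgebra.map_id]
  rfl

lemma phiMap_apply (n m : ℕ) (f : Fin n → Fin m) [inst : Fintype (sections n m f)] (x : EA m) :
    phiMap n m f x = (Nat.card (sections n m f) : ℂ)⁻¹ •
      ∑ g : sections n m f, (ExteriorAlgebra.map (pushLin m n g.1)).toLinearMap x := by
  have : phiMap n m f = (Nat.card (sections n m f) : ℂ)⁻¹ •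
      ∑ g : sections n m f, (ExteriorAlgebra.map (pushLin m n g.1)).toLinearMap := by
    rw [phiMap]
    congr 1
    apply Finset.sum_congr _ (fun _ _ => rfl)
    congr 1
    exact Subsingleton.elim _ _
  rw [this, LinearMap.smul_apply, LinearMap.sum_apply]

lemma fstar_phiMap_apply (n m : ℕ) (f : Fin n → Fin m) (hf : Function.Surjective f) (x : EA m) :
    fstar n m f (phiMap n m f x) = x := by
  letI : Fintype (sections n m f) := Fintype.ofFinite _
  have hne : Nonempty (sections n m f) := sections_nonempty n m f hf
  rw [phiMap_apply, map_smul, map_sum]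
  have heach : ∀ g : sections n m f,
      fstar n m f ((ExteriorAlgebra.map (pushLin m n g.1)).toLinearMap x) = x := by
    intro g
    exact congrFun (congrArg DFunLike.coe (fstar_comp_section n m f g)) x
  rw [Finset.sum_congr rfl (fun g _ => heach g), Finset.sum_const, Finset.card_univ,
    Nat.card_eq_fintype_card]
  rw [← Nat.cast_smul_eq_nsmul ℂ, smul_smul, inv_mul_cancel₀, one_smul]
  exact Nat.cast_ne_zero.2 Fintype.card_ne_zero

lemma permMap_phiMap_apply (n m : ℕ) (f : Fin n → Fin m) (σ : Equiv.Perm (Fin n))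
    (hσ : σ ∈ youngSubgroup n m f) (x : EA m) :
    permMap n σ (phiMap n m f x) = phiMap n m f x := by
  letI : Fintype (sections n m f) := Fintype.ofFinite _
  rw [phiMap_apply, map_smul, map_sum]
  congr 1
  have hterm : ∀ g : sections n m f,
      permMap n σ ((ExteriorAlgebra.map (pushLin m n g.1)).toLinearMap x) =
        (ExteriorAlgebra.map (pushLin m n (⇑σ ∘ g.1))).toLinearMap x := by
    intro g
    rw [permMap_eq]
    have : (ExteriorAlgebra.map (pushLin n n ⇑σ)).toLinearMap ∘ₗ
        (ExteriorAlgebra.map (pushLin m n g.1)).toLinearMap =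
        (ExteriorAlgebra.map (pushLin m n (⇑σ ∘ g.1))).toLinearMap := by
      rw [← AlgHom.comp_toLinearMap, ExteriorAlgebra.map_comp_map, pushLin_comp]
    exact congrFun (congrArg DFunLike.coe this) x
  rw [Finset.sum_congr rfl (fun g _ => hterm g)]
  -- reindex
  have hsec : ∀ g : sections n m f, f ∘ (⇑σ ∘ g.1) = id := by
    intro g
    funext j
    have h1 : f (σ (g.1 j)) = f (g.1 j) := hσ (g.1 j)
    have h2 : f (g.1 j) = j := congrFun g.2 j
    simp [Function.comp, h1, h2]
  have hsec' : ∀ g : sections n m f, f ∘ (⇑σ⁻¹ ∘ g.1) = id := by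
    intro g
    funext j
    have h1 : f (σ⁻¹ (g.1 j)) = f (g.1 j) := (youngSubgroup n m f).inv_mem hσ (g.1 j)
    have h2 : f (g.1 j) = j := congrFun g.2 j
    show f (σ⁻¹ (g.1 j)) = j
    rw [h1, h2]
  let e : sections n m f ≃ sections n m f :=
    { toFun := fun g => ⟨⇑σ ∘ g.1, hsec g⟩
      invFun := fun g => ⟨⇑σ⁻¹ ∘ g.1, hsec' g⟩
      left_inv := fun g => by
        apply Subtype.ext
        funext j
        simp [Function.comp]
      right_inv := fun g => by
        apply Subtype.ext
        funext j
        simp [Function.comp] }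
  exact (Equiv.sum_comp e (fun g => (ExteriorAlgebra.map (pushLin m n g.1)).toLinearMap x)).symm
    ▸ (Finset.sum_congr rfl (fun g _ => rfl))

lemma phi_mem_fixedW (n m l : ℕ) (f : Fin n → Fin m) (w : EA m) (hw : w ∈ Wsub m l) :
    phiMap n m f w ∈ fixedW n m l f := by
  letI : Fintype (sections n m f) := Fintype.ofFinite _
  refine Submodule.mem_inf.2 ⟨?_, ?_⟩
  · rw [phiMap_apply]
    apply Submodule.smul_mem
    apply Submodule.sum_mem
    intro g _
    apply map_Wsub_le m n l (pushLin m n g.1)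
    · intro x hx
      simp only [stdRep, LinearMap.mem_ker] at hx ⊢
      rw [sumLin_pushLin, hx]
    · exact Submodule.mem_map_of_mem hw
  · refine (Submodule.mem_iInf _).2 fun σ => (Submodule.mem_iInf _).2 fun hσ => ?_
    rw [LinearMap.mem_ker, LinearMap.sub_apply, LinearMap.id_apply, sub_eq_zero]
    exact permMap_phiMap_apply n m f σ hσ w

lemma partA (n m l : ℕ) (f : Fin n → Fin m) (hf : Function.Surjective f) :
    Submodule.map (fstar n m f) (fixedW n m l f) = Wsub m l := by
  apply le_antisymm
  · refine le_trans (Submodule.map_mono inf_le_left) ?_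
    exact fstar_Wsub_le n m l f
  · intro w hw
    exact ⟨phiMap n m f w, phi_mem_fixedW n m l f w hw, fstar_phiMap_apply n m f hf w⟩
lemma image_perm_cancel (n : ℕ) (σ : Equiv.Perm (Fin n)) (s t : Finset (Fin n))
    (h : s.image ⇑σ = t.image ⇑σ) : s = t := by
  have h2 := congrArg (Finset.image ⇑σ⁻¹) h
  have hid : ∀ u : Finset (Fin n), (u.image ⇑σ).image ⇑σ⁻¹ = u := by
    intro u
    rw [Finset.image_image]
    have : (⇑σ⁻¹ ∘ ⇑σ) = id := funext fun z => σ.symm_apply_apply z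
    rw [this, Finset.image_id]
  rwa [hid, hid] at h2

lemma swap_mem_young (n m : ℕ) (f : Fin n → Fin m) {x y : Fin n} (hxy : f x = f y) :
    Equiv.swap x y ∈ youngSubgroup n m f := by
  show ∀ i, f (Equiv.swap x y i) = f i
  intro i
  rcases eq_or_ne i x with rfl | hx
  · rw [Equiv.swap_apply_left]; exact hxy.symm
  rcases eq_or_ne i y with rfl | hy
  · rw [Equiv.swap_apply_right]; exact hxy
  · rw [Equiv.swap_apply_of_ne_of_ne hx hy]

def matchFun {n m : ℕ} (f : Fin n → Fin m) (T : Finset (Fin m)) (xs ys : Fin m → Fin n)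
    (i : Fin n) : Fin n :=
  if f i ∈ T then Equiv.swap (xs (f i)) (ys (f i)) i else i

lemma exists_young_perm (n m : ℕ) (f : Fin n → Fin m) (S S' : Finset (Fin n))
    (hinjS : Set.InjOn f ↑S) (hinjS' : Set.InjOn f ↑S')
    (himg : S.image f = S'.image f) :
    ∃ σ : Equiv.Perm (Fin n), σ ∈ youngSubgroup n m f ∧ S.image ⇑σ = S' := by
  classical
  rcases S.eq_empty_or_nonempty with rfl | ⟨x₀, hx₀⟩
  · refine ⟨1, (youngSubgroup n m f).one_mem, ?_⟩
    have : S'.image f = ∅ := by rw [← himg]; simp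
    rw [Finset.image_eq_empty] at this
    simp [this]
  · set T : Finset (Fin m) := S.image f with hT
    set xs : Fin m → Fin n := fun t => if h : t ∈ T then (Finset.mem_image.1 h).choose else x₀
      with hxs_def
    set ys : Fin m → Fin n := fun t =>
      if h : t ∈ S'.image f then (Finset.mem_image.1 h).choose else x₀ with hys_def
    have hxs_mem : ∀ t ∈ T, xs t ∈ S ∧ f (xs t) = t := by
      intro t ht
      rw [hxs_def]; simp only [dif_pos ht]
      exact ⟨(Finset.mem_image.1 ht).choose_spec.1, (Finset.mem_image.1 ht).choose_spec.2⟩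
    have hys_mem : ∀ t ∈ T, ys t ∈ S' ∧ f (ys t) = t := by
      intro t ht
      rw [himg] at ht
      rw [hys_def]; simp only [dif_pos ht]
      exact ⟨(Finset.mem_image.1 ht).choose_spec.1, (Finset.mem_image.1 ht).choose_spec.2⟩
    have hxs_eq : ∀ x ∈ S, xs (f x) = x := by
      intro x hx
      have ht : f x ∈ T := Finset.mem_image_of_mem f hx
      exact hinjS (hxs_mem _ ht).1 hx (hxs_mem _ ht).2
    have hys_eq : ∀ y ∈ S', ys (f y) = y := by
      intro y hy
      have ht : f y ∈ T := by rw [himg]; exact Finset.mem_image_of_mem f hy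
      exact hinjS' (hys_mem _ ht).1 hy (hys_mem _ ht).2
    have happ : ∀ j, matchFun f T xs ys j =
        if f j ∈ T then Equiv.swap (xs (f j)) (ys (f j)) j else j := fun j => rfl
    have hfσ : ∀ i, f ((matchFun f T xs ys) i) = f i := by
      intro i
      rw [happ i]
      by_cases h : f i ∈ T
      · simp only [if_pos h]
        rw [Equiv.swap_apply_def]
        split_ifs with h1 h2
        · exact (hys_mem _ h).2
        · exact (hxs_mem _ h).2
        · rfl
      · simp only [if_neg h]
    have hinvol : Function.Involutive (matchFun f T xs ys) := by
      intro i
      by_cases h : f i ∈ T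
      · have h1 : f ((matchFun f T xs ys) i) = f i := hfσ i
        rw [happ (matchFun f T xs ys i), h1, if_pos h, happ i, if_pos h]
        exact Equiv.swap_apply_self _ _ _
      · have h0 : (matchFun f T xs ys) i = i := by rw [happ i, if_neg h]
        rw [h0, h0]
    refine ⟨hinvol.toPerm (matchFun f T xs ys), ?_, ?_⟩
    · show ∀ i, f ((matchFun f T xs ys) i) = f i
      exact hfσ
    · have hcoe : ⇑(hinvol.toPerm (matchFun f T xs ys)) = (matchFun f T xs ys) := rfl
      rw [hcoe]
      apply Finset.eq_of_subset_of_card_le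
      · intro z hz
        obtain ⟨x, hx, rfl⟩ := Finset.mem_image.1 hz
        have ht : f x ∈ T := Finset.mem_image_of_mem f hx
        rw [happ x]
        simp only [if_pos ht]
        rw [hxs_eq x hx, Equiv.swap_apply_left]
        exact (hys_mem _ ht).2 ▸ (hys_mem _ ht).1
      · have h1 : (S.image (matchFun f T xs ys)).card = S.card := Finset.card_image_of_injective _ hinvol.injective
        have h2 : S.card = T.card := (Finset.card_image_of_injOn hinjS).symm
        have h3 : S'.card = T.card := by rw [himg]; exact (Finset.card_image_of_injOn hinjS').symm
        omega
lemma coeff_eq (n l : ℕ) (a : BS n l → ℂ) (T : BS n l) :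
    cB n l T (∑ S : BS n l, a S • wB n l S) = a T := by
  rw [map_sum]
  have : ∀ S : BS n l, cB n l T (a S • wB n l S) = if S = T then a S else 0 := by
    intro S
    rw [map_smul, cB_wB]
    by_cases h : T = S
    · subst h; simp
    · rw [if_neg h, if_neg (fun hc => h hc.symm)]; simp
  rw [Finset.sum_congr rfl (fun S _ => this S), Finset.sum_ite_eq' Finset.univ T a,
    if_pos (Finset.mem_univ T)]

lemma image_perm_tupF (n l : ℕ) (σ : Equiv.Perm (Fin n)) (S : BS n l) :
    Finset.image (fun a => σ (tupF S a)) Finset.univ = Finset.image ⇑σ S.1 := by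
  rw [show (fun a => σ (tupF S a)) = ⇑σ ∘ tupF S from rfl, ← Finset.image_image, image_tupF]

lemma invariance_reln (n l : ℕ) (a : BS n l → ℂ) (σ : Equiv.Perm (Fin n))
    (hv : permMap n σ (∑ S : BS n l, a S • wB n l S) = ∑ S : BS n l, a S • wB n l S)
    (S T : BS n l)
    (huniq : ∀ S' : BS n l, Finset.image ⇑σ S'.1 = T.1 → S' = S) :
    a T = a S * cB n l T (ιMulti ℂ l (fun x => evec n (σ (tupF S x)))) := by
  have h1 : cB n l T (permMap n σ (∑ S' : BS n l, a S' • wB n l S')) = a T := by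
    rw [hv, coeff_eq]
  rw [map_sum, map_sum] at h1
  have hterm : ∀ S' : BS n l, cB n l T (permMap n σ (a S' • wB n l S')) =
      if S' = S then a S * cB n l T (ιMulti ℂ l (fun x => evec n (σ (tupF S x)))) else 0 := by
    intro S'
    rw [map_smul, map_smul, smul_eq_mul, wB, permMap_ιMulti]
    by_cases h : S' = S
    · subst h; rw [if_pos rfl]
    · rw [if_neg h, cB_eq_zero, mul_zero]
      rw [image_perm_tupF]
      exact fun hc => h (huniq S' hc)
  rw [Finset.sum_congr rfl (fun S' _ => hterm S'), Finset.sum_ite_eq' Finset.univ S,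
    if_pos (Finset.mem_univ S)] at h1
  exact h1.symm

lemma coeff_zero_of_noninj (n m l : ℕ) (f : Fin n → Fin m) (a : BS n l → ℂ)
    (hinv : ∀ σ ∈ youngSubgroup n m f,
      permMap n σ (∑ S : BS n l, a S • wB n l S) = ∑ S : BS n l, a S • wB n l S)
    (S : BS n l) {x y : Fin n} (hx : x ∈ S.1) (hy : y ∈ S.1) (hne : x ≠ y)
    (hfxy : f x = f y) : a S = 0 := by
  set σ := Equiv.swap x y with hσ
  have himg : Finset.image ⇑σ S.1 = S.1 := by
    apply Finset.eq_of_subset_of_card_le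
    · intro z hz
      obtain ⟨w, hw, rfl⟩ := Finset.mem_image.1 hz
      rw [hσ, Equiv.swap_apply_def]
      split_ifs with h1 h2
      · exact hy
      · exact hx
      · exact hw
    · rw [Finset.card_image_of_injective _ σ.injective]
  have huniq : ∀ S' : BS n l, Finset.image ⇑σ S'.1 = S.1 → S' = S := by
    intro S' h
    apply Subtype.ext
    exact image_perm_cancel n σ S'.1 S.1 (by rw [h, himg])
  have hrel := invariance_reln n l a σ (hinv σ (swap_mem_young n m f hfxy)) S S huniq
  -- compute the coefficient: it is -1
  set p := (S.1.orderIsoOfFin S.2).symm ⟨x, hx⟩ with hp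
  set q := (S.1.orderIsoOfFin S.2).symm ⟨y, hy⟩ with hq
  have htp : tupF S p = x := congrArg Subtype.val ((S.1.orderIsoOfFin S.2).apply_symm_apply ⟨x, hx⟩)
  have htq : tupF S q = y := congrArg Subtype.val ((S.1.orderIsoOfFin S.2).apply_symm_apply ⟨y, hy⟩)
  have hpq : p ≠ q := by
    intro hc
    exact hne (by rw [← htp, ← htq, hc])
  have hcompose : (fun b => evec n (σ (tupF S b))) =
      (fun b => evec n (tupF S b)) ∘ ⇑(Equiv.swap p q) := by
    funext b
    simp only [Function.comp_apply]
    congr 1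
    rw [hσ, Equiv.swap_apply_def, Equiv.swap_apply_def]
    by_cases h1 : b = p
    · rw [if_pos (by rw [h1, htp]), if_pos h1, htq]
    · rw [if_neg (fun hc => h1 (tupF_injective S (by rw [hc, htp])))]
      by_cases h2 : b = q
      · rw [if_pos (by rw [h2, htq]), if_neg h1, if_pos h2, htp]
      · rw [if_neg (fun hc => h2 (tupF_injective S (by rw [hc, htq]))), if_neg h1, if_neg h2]
  have hswap : ιMulti ℂ l (fun x => evec n (σ (tupF S x))) = -(wB n l S) := by
    rw [hcompose, wB]
    exact AlternatingMap.map_swap _ _ hpq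
  rw [hswap, map_neg, cB_wB, if_pos rfl] at hrel
  linear_combination hrel / 2
lemma det_perm_matrix (l : ℕ) (θ : Equiv.Perm (Fin l)) :
    Matrix.det (Matrix.of fun a b => if θ a = b then (1 : ℂ) else 0) =
      ((Equiv.Perm.sign θ : ℤ) : ℂ) := by
  have h : (Matrix.of fun a b => if θ a = b then (1 : ℂ) else 0) =
      (1 : Matrix (Fin l) (Fin l) ℂ).submatrix ⇑θ id := by
    ext a b
    simp [Matrix.one_apply, Matrix.submatrix_apply]
  rw [h, Matrix.det_permute, Matrix.det_one, mul_one]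

lemma mySign_ne_zero (l : ℕ) (θ : Equiv.Perm (Fin l)) : ((Equiv.Perm.sign θ : ℤ) : ℂ) ≠ 0 := by
  rcases Int.units_eq_one_or (Equiv.Perm.sign θ) with h | h <;> rw [h] <;> norm_num

lemma key_inj (n m l : ℕ) (f : Fin n → Fin m) (v : EA n)
    (hv : v ∈ fixedW n m l f) (hzero : fstar n m f v = 0) : v = 0 := by
  classical
  obtain ⟨hvW, hvfix⟩ := Submodule.mem_inf.1 hv
  have hinv : ∀ σ ∈ youngSubgroup n m f, permMap n σ v = v := by
    intro σ hσ
    have h1 := (Submodule.mem_iInf _).1 hvfix σ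
    have h2 := (Submodule.mem_iInf _).1 h1 hσ
    rw [LinearMap.mem_ker, LinearMap.sub_apply, LinearMap.id_apply, sub_eq_zero] at h2
    exact h2
  obtain ⟨a, ha⟩ := (Submodule.mem_span_range_iff_exists_fun ℂ).1 (Wsub_le_span n l hvW)
  have hinv' : ∀ σ ∈ youngSubgroup n m f,
      permMap n σ (∑ S : BS n l, a S • wB n l S) = ∑ S : BS n l, a S • wB n l S := by
    rw [ha]; exact hinv
  have hnoninj : ∀ S : BS n l, ¬ Set.InjOn f ↑S.1 → a S = 0 := by
    intro S hS
    rw [Set.InjOn] at hS; push_neg at hS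
    obtain ⟨x, hx, y, hy, hfxy, hxy⟩ := hS
    exact coeff_zero_of_noninj n m l f a hinv' S (Finset.mem_coe.1 hx) (Finset.mem_coe.1 hy)
      hxy hfxy
  have hall : ∀ S : BS n l, a S = 0 := by
    intro S
    by_cases hinj : Set.InjOn f ↑S.1
    swap
    · exact hnoninj S hinj
    set T : BS m l := ⟨S.1.image f, by
      rw [Finset.card_image_of_injOn hinj, S.2]⟩ with hTdef
    set dd : BS n l → ℂ :=
      fun S' => cB m l T (ιMulti ℂ l (fun x => evec m (f (tupF S' x)))) with hdd
    have hz : ∑ S' : BS n l, a S' * dd S' = 0 := by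
      calc ∑ S' : BS n l, a S' * dd S'
          = ∑ S' : BS n l, cB m l T (fstar n m f (a S' • wB n l S')) := by
            apply Finset.sum_congr rfl
            intro S' _
            rw [map_smul, map_smul, wB, fstar_ιMulti, smul_eq_mul, hdd]
        _ = cB m l T (fstar n m f (∑ S' : BS n l, a S' • wB n l S')) := by
            rw [map_sum, map_sum]
        _ = 0 := by rw [ha, hzero, map_zero]
    have hterm : ∀ S' : BS n l,
        a S' * dd S' = if S'.1.image f = T.1 ∧ Set.InjOn f ↑S'.1 then a S * dd S else 0 := by
      intro S'
      by_cases hinj' : Set.InjOn f ↑S'.1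
      · by_cases himg : S'.1.image f = T.1
        · rw [if_pos ⟨himg, hinj'⟩]
          obtain ⟨σ, hσy, hσimg⟩ := exists_young_perm n m f S.1 S'.1 hinj hinj' (by rw [himg])
          have huniq : ∀ S'' : BS n l, Finset.image ⇑σ S''.1 = S'.1 → S'' = S := by
            intro S'' h
            exact Subtype.ext (image_perm_cancel n σ S''.1 S.1 (by rw [h, hσimg]))
          have hrel := invariance_reln n l a σ (hinv' σ hσy) S S' huniq
          have hmemS' : ∀ x : Fin l, σ (tupF S x) ∈ S'.1 := by
            intro x; rw [← hσimg]; exact Finset.mem_image_of_mem _ (tupF_mem S x)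
          have hθinj : Function.Injective (fun x : Fin l =>
              (S'.1.orderIsoOfFin S'.2).symm ⟨σ (tupF S x), hmemS' x⟩) := by
            intro x y hxy
            have h2 := congrArg (fun t => ((S'.1.orderIsoOfFin S'.2) t : Fin n)) hxy
            simp only [OrderIso.apply_symm_apply] at h2
            exact tupF_injective S (σ.injective h2)
          set θ := Equiv.ofBijective _ (Finite.injective_iff_bijective.mp hθinj) with hθ
          have hθap : ∀ x, tupF S' (θ x) = σ (tupF S x) := by
            intro x
            rw [hθ]
            exact congrArg Subtype.val ((S'.1.orderIsoOfFin S'.2).apply_symm_apply _)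
          have hd : cB n l S' (ιMulti ℂ l (fun x => evec n (σ (tupF S x)))) =
              ((Equiv.Perm.sign θ : ℤ) : ℂ) := by
            rw [cB_ιMulti_evec, ← det_perm_matrix l θ]
            congr 1
            ext x b
            simp only [Matrix.of_apply]
            have hiff : σ (tupF S x) = tupF S' b ↔ θ x = b := by
              rw [← hθap x]
              exact ⟨fun h => (S'.1.orderIsoOfFin S'.2).injective (Subtype.ext h)
                |>.symm ▸ rfl, fun h => by rw [h]⟩
            rw [if_congr hiff rfl rfl]
          have hDD : dd S = ((Equiv.Perm.sign θ : ℤ) : ℂ) * dd S' := by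
            rw [hdd]
            simp only
            rw [cB_ιMulti_evec, cB_ιMulti_evec, ← Matrix.det_permute θ]
            congr 1
            ext x b
            simp only [Matrix.submatrix_apply, Matrix.of_apply, id]
            have hfe : f (tupF S' (θ x)) = f (tupF S x) := by
              rw [hθap x]; exact hσy (tupF S x)
            rw [hfe]
          rw [hrel, hd, hDD]
          ring
        · rw [if_neg (fun hc => himg hc.1)]
          have hdz : dd S' = 0 := by
            rw [hdd]
            simp only
            rw [cB_eq_zero]
            rw [show (fun x => f (tupF S' x)) = f ∘ tupF S' from rfl, ← Finset.image_image,
              image_tupF]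
            exact himg
          rw [hdz, mul_zero]
      · rw [if_neg (fun hc => hinj' hc.2), hnoninj S' hinj', zero_mul]
    rw [Finset.sum_congr rfl (fun S' _ => hterm S'), Finset.sum_ite, Finset.sum_const,
      Finset.sum_const_zero, add_zero] at hz
    have hSmem : S ∈ Finset.univ.filter
        (fun S' : BS n l => S'.1.image f = T.1 ∧ Set.InjOn f ↑S'.1) := by
      refine Finset.mem_filter.2 ⟨Finset.mem_univ S, rfl, hinj⟩
    have hcard : (Finset.univ.filter
        (fun S' : BS n l => S'.1.image f = T.1 ∧ Set.InjOn f ↑S'.1)).card ≠ 0 :=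
      Finset.card_ne_zero_of_mem hSmem
    have hddS : dd S ≠ 0 := by
      have hmemT : ∀ x : Fin l, f (tupF S x) ∈ T.1 := fun x =>
        Finset.mem_image_of_mem f (tupF_mem S x)
      have hψinj : Function.Injective (fun x : Fin l =>
          (T.1.orderIsoOfFin T.2).symm ⟨f (tupF S x), hmemT x⟩) := by
        intro x y hxy
        have h2 := congrArg (fun t => ((T.1.orderIsoOfFin T.2) t : Fin m)) hxy
        simp only [OrderIso.apply_symm_apply] at h2
        exact tupF_injective S (hinj (Finset.mem_coe.2 (tupF_mem S x))
          (Finset.mem_coe.2 (tupF_mem S y)) h2)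
      set ψ := Equiv.ofBijective _ (Finite.injective_iff_bijective.mp hψinj) with hψ
      have hψap : ∀ x, tupF T (ψ x) = f (tupF S x) := by
        intro x
        rw [hψ]
        exact congrArg Subtype.val ((T.1.orderIsoOfFin T.2).apply_symm_apply _)
      have : dd S = ((Equiv.Perm.sign ψ : ℤ) : ℂ) := by
        rw [hdd]
        simp only
        rw [cB_ιMulti_evec, ← det_perm_matrix l ψ]
        congr 1
        ext x b
        simp only [Matrix.of_apply]
        have hiff : f (tupF S x) = tupF T b ↔ ψ x = b := by
          rw [← hψap x]
          exact ⟨fun h => (T.1.orderIsoOfFin T.2).injective (Subtype.ext h) |>.symm ▸ rfl,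
            fun h => by rw [h]⟩
        rw [if_congr hiff rfl rfl]
      rw [this]
      exact mySign_ne_zero l ψ
    rw [nsmul_eq_mul] at hz
    rcases mul_eq_zero.1 hz with h | h
    · exact absurd (Nat.cast_eq_zero.1 h) hcard
    · rcases mul_eq_zero.1 h with h2 | h2
      · exact h2
      · exact absurd h2 hddS
  rw [← ha]
  apply Finset.sum_eq_zero
  intro S _
  rw [hall S, zero_smul]
lemma det_tup_delta {κ : Type*} [LinearOrder κ] [DecidableEq κ] {l : ℕ}
    (S T : {S : Finset κ // S.card = l}) :
    Matrix.det (Matrix.of fun a b => if tupF T a = tupF S b then (1 : ℂ) else 0) =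
      if S = T then 1 else 0 := by
  by_cases hST : S = T
  · subst hST
    rw [if_pos rfl]
    have h1 : (Matrix.of fun a b => if tupF S a = tupF S b then (1 : ℂ) else 0) = 1 := by
      ext a b
      simp only [Matrix.of_apply, Matrix.one_apply]
      by_cases hab : a = b
      · simp [hab]
      · rw [if_neg (fun hh => hab (tupF_injective S hh)), if_neg hab]
    rw [h1, Matrix.det_one]
  · rw [if_neg hST]
    classical
    have hex : ∃ s ∈ S.1, s ∉ T.1 := by
      by_contra hcon
      push_neg at hcon
      have hcard : T.1.card ≤ S.1.card := by rw [S.2, T.2]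
      exact hST (Subtype.ext (Finset.eq_of_subset_of_card_le hcon hcard).symm).symm
    obtain ⟨s, hs, hns⟩ := hex
    obtain ⟨b, hb⟩ : ∃ b, tupF S b = s :=
      ⟨(S.1.orderIsoOfFin S.2).symm ⟨s, hs⟩, congrArg Subtype.val
        ((S.1.orderIsoOfFin S.2).apply_symm_apply ⟨s, hs⟩)⟩
    apply Matrix.det_eq_zero_of_column_eq_zero b
    intro a
    simp only [Matrix.of_apply]
    rw [if_neg]
    intro hcon2
    exact hns (by rw [← hb, ← hcon2]; exact tupF_mem T a)

abbrev kap (m : ℕ) (z : Fin m) := {i : Fin m // i ≠ z}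

def bvec (m : ℕ) (z : Fin m) (i : kap m z) : Fin m → ℂ := evec m i.1 - evec m z

abbrev BK (m l : ℕ) (z : Fin m) := {S : Finset (kap m z) // S.card = l}

def uB (m l : ℕ) (z : Fin m) (S : BK m l z) : EA m :=
  ιMulti ℂ l (fun a => bvec m z (tupF S a))

def cK (m l : ℕ) (z : Fin m) (S : BK m l z) : EA m →ₗ[ℂ] ℂ :=
  pairFun m l (fun a => evec m (tupF S a).1)

lemma sumLin_evec (m : ℕ) (i : Fin m) : sumLin m (evec m i) = 1 := by
  simp [sumLin, evec]

lemma bvec_mem (m : ℕ) (z : Fin m) (i : kap m z) : bvec m z i ∈ stdRep m := by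
  simp only [stdRep, LinearMap.mem_ker, bvec, map_sub, sumLin_evec, sub_self]

lemma uB_mem (m l : ℕ) (z : Fin m) (S : BK m l z) : uB m l z S ∈ Wsub m l := by
  have hvec : ∀ a : Fin l, bvec m z (tupF S a) ∈ stdRep m := fun a => bvec_mem m z _
  refine ⟨ιMulti ℂ l (fun a => (⟨bvec m z (tupF S a), hvec a⟩ : ↥(stdRep m))), ?_, ?_⟩
  · exact ExteriorAlgebra.ιMulti_range ℂ l ⟨_, rfl⟩
  · rw [AlgHom.toLinearMap_apply, ExteriorAlgebra.map_apply_ιMulti]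
    rfl

lemma stdRep_expand (m : ℕ) (z : Fin m) (x : Fin m → ℂ) (hx : x ∈ stdRep m) :
    x = ∑ i : kap m z, x i.1 • bvec m z i := by
  classical
  have h0 : ∑ i : Fin m, x i = 0 := hx
  have e1 : ∑ i : kap m z, x i.1 • bvec m z i =
      (∑ i : kap m z, x i.1 • evec m i.1) - (∑ i : kap m z, x i.1) • evec m z := by
    rw [Finset.sum_smul]
    rw [← Finset.sum_sub_distrib]
    apply Finset.sum_congr rfl
    intro i _
    rw [bvec, smul_sub]
  have hmem : ∀ i : Fin m, i ∈ Finset.univ.erase z ↔ i ≠ z := by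
    intro i; simp [Finset.mem_erase]
  have e2 : ∑ i : kap m z, x i.1 • evec m i.1 = ∑ i ∈ Finset.univ.erase z, x i • evec m i :=
    (Finset.sum_subtype (Finset.univ.erase z) hmem (fun i => x i • evec m i)).symm
  have e3 : ∑ i : kap m z, x i.1 = ∑ i ∈ Finset.univ.erase z, x i :=
    (Finset.sum_subtype (Finset.univ.erase z) hmem (fun i => x i)).symm
  have e4 : ∑ i ∈ Finset.univ.erase z, x i = -x z := by
    have := Finset.sum_erase_add Finset.univ (fun i => x i) (Finset.mem_univ z)
    rw [h0] at this
    linear_combination this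
  have e5 : ∑ i ∈ Finset.univ.erase z, x i • evec m i = x - x z • evec m z := by
    have h5 := Finset.sum_erase_add Finset.univ (fun i => x i • evec m i) (Finset.mem_univ z)
    rw [← x_expand m x] at h5
    rw [eq_sub_iff_add_eq]
    exact h5
  rw [e1, e2, e3, e4, e5, neg_smul]
  abel

lemma Wsub_le_span_uB (m l : ℕ) (z : Fin m) :
    Wsub m l ≤ Submodule.span ℂ (Set.range (uB m l z)) := by
  rw [Wsub, ← ExteriorAlgebra.ιMulti_span_fixedDegree ℂ l, Submodule.map_span]
  apply Submodule.span_le.2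
  rintro _ ⟨_, ⟨vv, rfl⟩, rfl⟩
  rw [AlgHom.toLinearMap_apply, ExteriorAlgebra.map_apply_ιMulti]
  have hexp : ∀ a : Fin l, ((stdRep m).subtype ∘ vv) a =
      ∑ i : kap m z, (vv a).1 i.1 • bvec m z i := fun a => stdRep_expand m z _ (vv a).2
  rw [ιMulti_expand _ (fun a i => (vv a).1 i.1) (bvec m z) hexp]
  apply Submodule.sum_mem
  intro j _
  exact Submodule.smul_mem _ _ (ιMulti_comp_mem_span l (bvec m z) j)

lemma cK_uB (m l : ℕ) (z : Fin m) (S T : BK m l z) :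
    cK m l z S (uB m l z T) = if S = T then 1 else 0 := by
  rw [cK, uB, pairFun_ιMulti]
  have hmat : (Matrix.of fun a b => stdInner m (evec m (tupF S b).1) (bvec m z (tupF T a))) =
      Matrix.of fun a b => if tupF T a = tupF S b then (1 : ℂ) else 0 := by
    ext a b
    simp only [Matrix.of_apply]
    rw [stdInner_evec, bvec, Pi.sub_apply, evec_apply, evec_apply, if_neg (tupF S b).2,
      sub_zero]
    have hiff : ((tupF S b).1 = (tupF T a).1) ↔ (tupF T a = tupF S b) :=
      ⟨fun h => (Subtype.ext h).symm, fun h => congrArg Subtype.val h.symm⟩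
    rw [if_congr hiff rfl rfl]
  rw [hmat, det_tup_delta]

lemma uB_li (m l : ℕ) (z : Fin m) : LinearIndependent ℂ (uB m l z) := by
  apply Fintype.linearIndependent_iff.2
  intro g hg S
  have h1 := congrArg (cK m l z S) hg
  rw [map_sum, map_zero] at h1
  have h2 : ∀ T : BK m l z, cK m l z S (g T • uB m l z T) = if T = S then g T else 0 := by
    intro T
    rw [map_smul, cK_uB]
    by_cases h : S = T
    · subst h; simp
    · rw [if_neg h, if_neg (fun hc => h hc.symm)]; simp
  rw [Finset.sum_congr rfl (fun T _ => h2 T), Finset.sum_ite_eq' Finset.univ S g,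
    if_pos (Finset.mem_univ S)] at h1
  exact h1

lemma finrank_Wsub (m l : ℕ) (hm : 0 < m) :
    Module.finrank ℂ ↥(Wsub m l) = Nat.choose (m - 1) l := by
  set z : Fin m := ⟨0, hm⟩
  have heq : Wsub m l = Submodule.span ℂ (Set.range (uB m l z)) :=
    le_antisymm (Wsub_le_span_uB m l z)
      (Submodule.span_le.2 (Set.range_subset_iff.2 (fun S => uB_mem m l z S)))
  rw [heq, finrank_span_eq_card (uB_li m l z)]
  have h1 : Fintype.card (kap m z) = m - 1 := by
    simp [Fintype.card_subtype_compl]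
  have h2 : Fintype.card (BK m l z) = (Fintype.card (kap m z)).choose l :=
    Fintype.card_finset_len l
  rw [h2, h1]
end Aux

/-- For a surjection `f : {1,…,n} → {1,…,m}` with `l+1 ≤ m ≤ n`, the restriction of `f_*`
to `W_{n,l}^{𝔖_f}` is a linear isomorphism onto `W_{m,l}`; in particular
`dim W_{n,l}^{𝔖_f} = C(m−1, l)`, which is `1` when `m = l+1`. -/
theorem statement_11 (n m l : ℕ) (hn : 1 ≤ n) (hl1 : 1 ≤ l) (hl2 : l ≤ n - 1)
    (hm : l + 1 ≤ m) (hmn : m ≤ n) (f : Fin n → Fin m) (hf : Function.Surjective f) :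
    Submodule.map (fstar n m f) (fixedW n m l f) = Wsub m l ∧
    Set.InjOn (fstar n m f) (fixedW n m l f : Set (EA n)) ∧
    Module.finrank ℂ ↥(fixedW n m l f) = Nat.choose (m - 1) l ∧
    (m = l + 1 → Module.finrank ℂ ↥(fixedW n m l f) = 1) := by
  have hA := partA n m l f hf
  have hInj : Set.InjOn (fstar n m f) (fixedW n m l f : Set (EA n)) := by
    intro x hx y hy hxy
    have hsub : x - y ∈ fixedW n m l f := Submodule.sub_mem _ hx hy
    have h0 : fstar n m f (x - y) = 0 := by rw [map_sub, hxy, sub_self]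
    exact sub_eq_zero.1 (key_inj n m l f (x - y) hsub h0)
  have hm0 : 0 < m := lt_of_lt_of_le (Nat.succ_pos l) hm
  have hrank2 : Module.finrank ℂ ↥(Wsub m l) = Nat.choose (m - 1) l := finrank_Wsub m l hm0
  have hmapin : ∀ x ∈ fixedW n m l f, fstar n m f x ∈ Wsub m l := by
    intro x hx
    have h1 : fstar n m f x ∈ Submodule.map (fstar n m f) (fixedW n m l f) :=
      Submodule.mem_map_of_mem hx
    rw [hA] at h1
    exact h1
  have hrank : Module.finrank ℂ ↥(fixedW n m l f) = Nat.choose (m - 1) l := by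
    let F : ↥(fixedW n m l f) →ₗ[ℂ] ↥(Wsub m l) := (fstar n m f).restrict hmapin
    have hFbij : Function.Bijective F := by
      constructor
      · intro x y hxy
        apply Subtype.ext
        apply hInj x.2 y.2
        exact congrArg Subtype.val hxy
      · intro w
        have hw : (w : EA m) ∈ Submodule.map (fstar n m f) (fixedW n m l f) := by
          rw [hA]; exact w.2
        obtain ⟨x, hx, hfx⟩ := hw
        exact ⟨⟨x, hx⟩, Subtype.ext hfx⟩
    rw [← hrank2]
    exact (LinearEquiv.ofBijective F hFbij).finrank_eq
  refine ⟨hA, hInj, hrank, fun hml => ?_⟩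
  rw [hrank, hml]
  simp
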